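/- Let O be a henselian discrete valuation ring containing its residue field κ (a field of char p), with fraction field K, maximal ideal m, and let D = Spec(O/m^ν) for some ν ≥ 1. Then the kernel I of the multiplication map O ⊗_κ (O/m^ν) → O/m^ν is a principal invertible ideal, generated by π⊗1 − 1⊗π for any uniformizer π, and I generates the unit ideal of K ⊗_κ (O/m^ν). -/

import Mathlib

set_option maxHeartbeats 1000000

open scoped TensorProduct

/-- Let `O` be an (equicharacteristic) henselian discrete valuation
ring containing its residue field `κ` (i.e. `O` is a `κ`-algebra and `κ → O → O/m` is
bijective), with fraction field `K` and maximal ideal `m`, and let `D = Spec (O/m^ν)`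
for some `ν ≥ 1`. Then the kernel `I` of the multiplication map
`O ⊗_κ (O/m^ν) → O/m^ν` is a principal invertible ideal, generated by
`π ⊗ 1 − 1 ⊗ π` for any uniformizer `π` (and this generator is a nonzerodivisor), and
`I` generates the unit ideal of `K ⊗_κ (O/m^ν)` (the generator becomes a unit). -/
theorem diagonal_ideal_invertible
    {κ O K : Type*} [Field κ] [CommRing O] [IsDomain O]
    [IsDiscreteValuationRing O] [HenselianLocalRing O]
    [Algebra κ O] [Field K] [Algebra O K] [IsFractionRing O K]
    [Algebra κ K] [IsScalarTower κ O K]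
    (hres : Function.Bijective ((IsLocalRing.residue O).comp (algebraMap κ O)))
    (ν : ℕ) (hν : 1 ≤ ν) (π : O) (hπ : Irreducible π) :
    (RingHom.ker (Algebra.TensorProduct.productMap
          (Ideal.Quotient.mkₐ κ (IsLocalRing.maximalIdeal O ^ ν))
          (AlgHom.id κ (O ⧸ IsLocalRing.maximalIdeal O ^ ν))).toRingHom
        = Ideal.span {π ⊗ₜ[κ] (1 : O ⧸ IsLocalRing.maximalIdeal O ^ ν)
            - 1 ⊗ₜ[κ] (Ideal.Quotient.mk (IsLocalRing.maximalIdeal O ^ ν) π)})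
    ∧ (π ⊗ₜ[κ] (1 : O ⧸ IsLocalRing.maximalIdeal O ^ ν)
          - 1 ⊗ₜ[κ] (Ideal.Quotient.mk (IsLocalRing.maximalIdeal O ^ ν) π))
        ∈ nonZeroDivisors (O ⊗[κ] (O ⧸ IsLocalRing.maximalIdeal O ^ ν))
    ∧ IsUnit ((Algebra.TensorProduct.map (IsScalarTower.toAlgHom κ O K)
          (AlgHom.id κ (O ⧸ IsLocalRing.maximalIdeal O ^ ν)))
        (π ⊗ₜ[κ] (1 : O ⧸ IsLocalRing.maximalIdeal O ^ ν)
          - 1 ⊗ₜ[κ] (Ideal.Quotient.mk (IsLocalRing.maximalIdeal O ^ ν) π))) := by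
  set I : Ideal O := IsLocalRing.maximalIdeal O ^ ν with hI
  set mk : O →+* O ⧸ I := Ideal.Quotient.mk I with hmkdef
  set t : O ⊗[κ] (O ⧸ I) := π ⊗ₜ[κ] (1 : O ⧸ I) - 1 ⊗ₜ[κ] (mk π) with ht
  set J : Ideal (O ⊗[κ] (O ⧸ I)) := Ideal.span {t} with hJ
  have hm : IsLocalRing.maximalIdeal O = Ideal.span {π} :=
    (IsDiscreteValuationRing.irreducible_iff_uniformizer π).mp hπ
  have hIπ : I = Ideal.span {π ^ ν} := by rw [hI, hm, Ideal.span_singleton_pow]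
  -- π^ν maps to 0 in the quotient
  have hπν : (mk π) ^ ν = 0 := by
    rw [hmkdef, ← map_pow, Ideal.Quotient.eq_zero_iff_mem, hIπ]
    exact Ideal.mem_span_singleton_self _
  -- (π ⊗ 1)^ν ∈ J
  have htpow : (π ⊗ₜ[κ] (1 : O ⧸ I)) ^ ν ∈ J := by
    have h1 : (π ⊗ₜ[κ] (1 : O ⧸ I)) ^ ν - (1 ⊗ₜ[κ] (mk π)) ^ ν ∈ J :=
      Ideal.mem_span_singleton.mpr (sub_dvd_pow_sub_pow _ _ ν)
    have h2 : ((1 : O) ⊗ₜ[κ] (mk π)) ^ ν = 0 := by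
      rw [Algebra.TensorProduct.tmul_pow, hπν, TensorProduct.tmul_zero]
    rw [h2, sub_zero] at h1
    exact h1
  -- the set of elements a with a ⊗ 1 ≡ 1 ⊗ mk a mod J
  set S : O → Prop := fun a => a ⊗ₜ[κ] (1 : O ⧸ I) - 1 ⊗ₜ[κ] (mk a) ∈ J with hS
  have hSκ : ∀ u : κ, S (algebraMap κ O u) := by
    intro u
    have h1 : mk (algebraMap κ O u) = algebraMap κ (O ⧸ I) u := by
      rw [IsScalarTower.algebraMap_apply κ O (O ⧸ I)]; rfl
    have h2 : (algebraMap κ O u) ⊗ₜ[κ] (1 : O ⧸ I) = 1 ⊗ₜ[κ] (algebraMap κ (O ⧸ I) u) := by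
      rw [Algebra.algebraMap_eq_smul_one, Algebra.algebraMap_eq_smul_one,
        TensorProduct.smul_tmul]
    simp only [hS, h1, h2, sub_self]
    exact J.zero_mem
  have hSπ : S π := Ideal.subset_span rfl
  have hSmul : ∀ a b : O, S a → S b → S (a * b) := by
    intro a b ha hb
    have key : (a * b) ⊗ₜ[κ] (1 : O ⧸ I) - 1 ⊗ₜ[κ] (mk (a * b))
        = (a ⊗ₜ[κ] (1 : O ⧸ I)) * (b ⊗ₜ[κ] (1 : O ⧸ I) - 1 ⊗ₜ[κ] (mk b))
          + (1 ⊗ₜ[κ] (mk b)) * (a ⊗ₜ[κ] (1 : O ⧸ I) - 1 ⊗ₜ[κ] (mk a)) := by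
      simp only [map_mul, mul_sub, Algebra.TensorProduct.tmul_mul_tmul, mul_one, one_mul]
      ring
    show (a * b) ⊗ₜ[κ] (1 : O ⧸ I) - 1 ⊗ₜ[κ] (mk (a * b)) ∈ J
    rw [key]
    exact J.add_mem (J.mul_mem_left _ hb) (J.mul_mem_left _ ha)
  have hSone : S 1 := by simpa using hSκ 1
  have hSpow : ∀ n : ℕ, S (π ^ n) := by
    intro n
    induction n with
    | zero => simpa using hSone
    | succ n ih => rw [pow_succ]; exact hSmul _ _ ih hSπ
  have hSadd : ∀ a b : O, S a → S b → S (a + b) := by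
    intro a b ha hb
    have key : (a + b) ⊗ₜ[κ] (1 : O ⧸ I) - 1 ⊗ₜ[κ] (mk (a + b))
        = (a ⊗ₜ[κ] (1 : O ⧸ I) - 1 ⊗ₜ[κ] (mk a))
          + (b ⊗ₜ[κ] (1 : O ⧸ I) - 1 ⊗ₜ[κ] (mk b)) := by
      simp only [map_add, TensorProduct.add_tmul, TensorProduct.tmul_add]
      ring
    show (a + b) ⊗ₜ[κ] (1 : O ⧸ I) - 1 ⊗ₜ[κ] (mk (a + b)) ∈ J
    rw [key]
    exact J.add_mem ha hb
  -- κ-coefficient expansion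
  have hsec : ∀ b : O, ∃ u : κ, ∃ b' : O, b = algebraMap κ O u + π * b' := by
    intro b
    obtain ⟨u, hu⟩ := hres.2 (IsLocalRing.residue O b)
    have hmem : b - algebraMap κ O u ∈ IsLocalRing.maximalIdeal O := by
      have : IsLocalRing.residue O (b - algebraMap κ O u) = 0 := by
        rw [map_sub]
        rw [RingHom.comp_apply] at hu
        rw [hu, sub_self]
      exact (Ideal.Quotient.eq_zero_iff_mem).mp this
    rw [hm, Ideal.mem_span_singleton] at hmem
    obtain ⟨b', hb'⟩ := hmem
    exact ⟨u, b', by linear_combination hb'⟩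
  -- main induction
  have main : ∀ k n : ℕ, ν ≤ n + k → ∀ b : O, S (π ^ n * b) := by
    intro k
    induction k with
    | zero =>
      intro n hn b
      have hνn : ν ≤ n := by omega
      have hmem : π ^ n * b ∈ I := by
        rw [hIπ, Ideal.mem_span_singleton]
        exact (pow_dvd_pow π hνn).mul_right b
      have hmk : mk (π ^ n * b) = 0 := Ideal.Quotient.eq_zero_iff_mem.mpr hmem
      have hsplit : π ^ n = π ^ ν * π ^ (n - ν) := by
        rw [← pow_add]
        congr 1
        omega
      have hfac : (π ^ n * b) ⊗ₜ[κ] (1 : O ⧸ I)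
          = (π ⊗ₜ[κ] (1 : O ⧸ I)) ^ ν * ((π ^ (n - ν) * b) ⊗ₜ[κ] (1 : O ⧸ I)) := by
        rw [Algebra.TensorProduct.tmul_pow, Algebra.TensorProduct.tmul_mul_tmul, one_pow,
          one_mul, ← mul_assoc, hsplit]
      show (π ^ n * b) ⊗ₜ[κ] (1 : O ⧸ I) - 1 ⊗ₜ[κ] (mk (π ^ n * b)) ∈ J
      rw [hmk, TensorProduct.tmul_zero, sub_zero, hfac]
      exact J.mul_mem_right _ htpow
    | succ k ih =>
      intro n hn b
      obtain ⟨u, b', hb⟩ := hsec b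
      have : π ^ n * b = algebraMap κ O u * π ^ n + π ^ (n + 1) * b' := by
        rw [hb]; ring
      rw [this]
      exact hSadd _ _ (hSmul _ _ (hSκ u) (hSpow n)) (ih (n + 1) (by omega) b')
  have hSall : ∀ b : O, S b := by
    intro b
    have := main ν 0 (by omega) b
    simpa using this
  -- the multiplication map
  set μ : O ⊗[κ] (O ⧸ I) →+* O ⧸ I := (Algebra.TensorProduct.productMap
      (Ideal.Quotient.mkₐ κ I) (AlgHom.id κ (O ⧸ I))).toRingHom with hμ
  have hμtmul : ∀ (a : O) (r : O ⧸ I), μ (a ⊗ₜ[κ] r) = mk a * r := fun a r => rfl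
  -- every element is congruent to 1 ⊗ (μ z) mod J
  have hcong : ∀ z : O ⊗[κ] (O ⧸ I), z - 1 ⊗ₜ[κ] (μ z) ∈ J := by
    intro z
    induction z using TensorProduct.induction_on with
    | zero => simpa using J.zero_mem
    | tmul a r =>
      have key : a ⊗ₜ[κ] r - 1 ⊗ₜ[κ] (μ (a ⊗ₜ[κ] r))
          = (1 ⊗ₜ[κ] r) * (a ⊗ₜ[κ] (1 : O ⧸ I) - 1 ⊗ₜ[κ] (mk a)) := by
        rw [hμtmul, mul_sub, Algebra.TensorProduct.tmul_mul_tmul,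
          Algebra.TensorProduct.tmul_mul_tmul]
        rw [one_mul, mul_one, one_mul, mul_comm r (mk a)]
      rw [key]
      exact J.mul_mem_left _ (hSall a)
    | add x y hx hy =>
      have key : x + y - 1 ⊗ₜ[κ] (μ (x + y))
          = (x - 1 ⊗ₜ[κ] (μ x)) + (y - 1 ⊗ₜ[κ] (μ y)) := by
        rw [map_add, TensorProduct.tmul_add]; ring
      rw [key]
      exact J.add_mem hx hy
  -- Part 1
  have part1 : RingHom.ker μ = J := by
    apply le_antisymm
    · intro z hz
      have hz0 : μ z = 0 := hz
      have := hcong z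
      rwa [hz0, TensorProduct.tmul_zero, sub_zero] at this
    · rw [hJ, Ideal.span_le, Set.singleton_subset_iff]
      show μ t = 0
      rw [ht, map_sub, hμtmul, hμtmul]
      simp
  -- Part 3
  set f : O ⊗[κ] (O ⧸ I) →ₐ[κ] K ⊗[κ] (O ⧸ I) :=
    Algebra.TensorProduct.map (IsScalarTower.toAlgHom κ O K) (AlgHom.id κ (O ⧸ I)) with hf
  have hft : f t = (algebraMap O K π) ⊗ₜ[κ] (1 : O ⧸ I) - 1 ⊗ₜ[κ] (mk π) := by
    rw [ht, map_sub, Algebra.TensorProduct.map_tmul, Algebra.TensorProduct.map_tmul]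
    simp
  have hunit : IsUnit ((algebraMap O K π) ⊗ₜ[κ] (1 : O ⧸ I)) := by
    have hne : algebraMap O K π ≠ 0 := by
      intro h
      exact hπ.ne_zero (IsFractionRing.injective O K (by simpa using h))
    have : IsUnit (algebraMap O K π) := isUnit_iff_ne_zero.mpr hne
    exact this.map (Algebra.TensorProduct.includeLeft (S := κ) :
      K →ₐ[κ] K ⊗[κ] (O ⧸ I))
  have hnil : IsNilpotent ((1 : K) ⊗ₜ[κ] (mk π)) := by
    refine ⟨ν, ?_⟩
    rw [Algebra.TensorProduct.tmul_pow, hπν, TensorProduct.tmul_zero]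
  have part3 : IsUnit (f t) := by
    rw [hft, sub_eq_add_neg]
    exact IsNilpotent.isUnit_add_left_of_commute hnil.neg hunit (Commute.all _ _)
  -- Part 2
  have hfinj : Function.Injective f := by
    have heq : ∀ z, f z = LinearMap.rTensor (O ⧸ I)
        (IsScalarTower.toAlgHom κ O K).toLinearMap z := by
      intro z
      induction z using TensorProduct.induction_on with
      | zero => simp
      | tmul a r => simp [hf, Algebra.TensorProduct.map_tmul]
      | add x y hx hy => simp [map_add, hx, hy]
    have hinj : Function.Injective (IsScalarTower.toAlgHom κ O K).toLinearMap :=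
      IsFractionRing.injective O K
    have := Module.Flat.rTensor_preserves_injective_linearMap
      (M := O ⧸ I) (IsScalarTower.toAlgHom κ O K).toLinearMap hinj
    intro x y hxy
    apply this
    rw [← heq, ← heq, hxy]
  have part2 : t ∈ nonZeroDivisors (O ⊗[κ] (O ⧸ I)) := by
    rw [mem_nonZeroDivisors_iff_right]
    intro x hx
    apply hfinj
    rw [map_zero]
    have : f x * f t = 0 := by rw [← map_mul, hx, map_zero]
    exact part3.mul_right_eq_zero.mp (by rwa [mul_comm])
  exact ⟨part1, part2, part3⟩
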